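/- arXiv:0911.4118 — 7 statements merged into one kernel-verified Lean document; each statement's English description precedes it below -/
import Mathlib

section
/- Let A, A* be a thin Hessenberg pair on V. Then A is multiplicity-free; that is, A is diagonalizable and each eigenspace of A has dimension one. -/
def IsHessenberg {K : Type*} [Field K] {n : ℕ} (B : Matrix (Fin n) (Fin n) K) : Prop :=
  (∀ i j : Fin n, (j : ℕ) + 1 < (i : ℕ) → B i j = 0) ∧
  (∀ i j : Fin n, (i : ℕ) = (j : ℕ) + 1 → B i j ≠ 0)
/-- A thin Hessenberg pair on `V`. -/
def IsTHPair {K V : Type*} [Field K] [AddCommGroup V] [Module K V] (d : ℕ)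
    (A Astar : Module.End K V) : Prop :=
  (∃ b : Module.Basis (Fin (d + 1)) K V,
      IsHessenberg (LinearMap.toMatrix b b A) ∧ (LinearMap.toMatrix b b Astar).IsDiag) ∧
  (∃ b : Module.Basis (Fin (d + 1)) K V,
      (LinearMap.toMatrix b b A).IsDiag ∧ IsHessenberg (LinearMap.toMatrix b b Astar))

lemma hess_eigenspace_le_one {K V : Type*} [Field K] [AddCommGroup V] [Module K V]
    {d : ℕ} (A : Module.End K V) (c : Module.Basis (Fin (d + 1)) K V)
    (hH : IsHessenberg (LinearMap.toMatrix c c A)) (μ : K) :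
    Module.finrank K (Module.End.eigenspace A μ) ≤ 1 := by
  set M := LinearMap.toMatrix c c A with hM
  have hinj : Function.Injective
      ((c.coord (Fin.last d)).comp (Module.End.eigenspace A μ).subtype) := by
    rw [← LinearMap.ker_eq_bot, Submodule.eq_bot_iff]
    rintro ⟨x, hx⟩ hx0
    simp only [LinearMap.mem_ker, LinearMap.comp_apply, Submodule.subtype_apply,
      Module.Basis.coord_apply] at hx0
    rw [Module.End.mem_eigenspace_iff] at hx
    set v : Fin (d + 1) → K := fun i => c.repr x i with hv
    have heq : ∀ i : Fin (d + 1), ∑ j, M i j * v j = μ * v i := by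
      intro i
      have h1 : M.mulVec (c.repr x) = c.repr (A x) := LinearMap.toMatrix_mulVec_repr c c A x
      have h2 := congrFun h1 i
      simp only [Matrix.mulVec, dotProduct] at h2
      rw [h2, hx]
      simp [hv]
    have key : ∀ k : ℕ, ∀ i : Fin (d + 1), d ≤ (i : ℕ) + k → v i = 0 := by
      intro k
      induction k with
      | zero =>
        intro i hi
        have : i = Fin.last d := by
          ext; simpa using le_antisymm i.is_le (by omega)
        rw [this]; exact hx0
      | succ k ih =>
        intro i hi
        by_cases hk : d ≤ (i : ℕ) + k
        · exact ih i hk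
        · have hid : (i : ℕ) < d := by omega
          set r : Fin (d + 1) := ⟨(i : ℕ) + 1, by omega⟩ with hr
          have hrow := heq r
          have hsum : ∑ j, M r j * v j = M r i * v i := by
            apply Finset.sum_eq_single
            · intro j _ hji
              rcases lt_or_gt_of_ne (fun hc : (j : ℕ) = (i : ℕ) => hji (by ext; exact hc)) with hlt | hgt
              · rw [hH.1 r j (by simp [hr]; omega), zero_mul]
              · rw [ih j (by omega), mul_zero]
            · intro hni; exact absurd (Finset.mem_univ i) hni
          have hvr : v r = 0 := ih r (by simp [hr]; omega)
          have hMri : M r i ≠ 0 := hH.2 r i (by simp [hr])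
          rw [hsum, hvr, mul_zero] at hrow
          exact (mul_eq_zero.mp hrow).resolve_left hMri
    have hv0 : ∀ i, v i = 0 := fun i => key (d - i) i (by omega)
    have : c.repr x = 0 := by ext i; exact hv0 i
    have hx00 : x = 0 := by
      have := congrArg c.repr.symm this
      simpa using this
    simp [hx00]
  calc Module.finrank K (Module.End.eigenspace A μ)
      ≤ Module.finrank K K := LinearMap.finrank_le_finrank_of_injective hinj
    _ = 1 := Module.finrank_self K

/-- Each member of a TH pair is multiplicity-free: diagonalizable with
all eigenspaces of dimension one. -/
theorem thPair_multiplicity_free {K V : Type*} [Field K] [AddCommGroup V] [Module K V]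
    {d : ℕ} (A Astar : Module.End K V) (h : IsTHPair d A Astar) :
    (⨆ μ : K, Module.End.eigenspace A μ) = ⊤ ∧
    ∀ μ : K, Module.End.HasEigenvalue A μ →
      Module.finrank K (Module.End.eigenspace A μ) = 1 := by
  obtain ⟨⟨c, hcH, _⟩, ⟨b, hbD, _⟩⟩ := h
  have : FiniteDimensional K V := Module.Finite.of_basis b
  constructor
  · apply le_antisymm le_top
    rw [← b.span_eq]
    apply Submodule.span_le.mpr
    rintro x ⟨j, rfl⟩
    have hbj : A (b j) = (LinearMap.toMatrix b b A) j j • b j := by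
      conv_lhs => rw [← Module.Basis.sum_repr b (A (b j))]
      rw [Finset.sum_eq_single j]
      · rw [LinearMap.toMatrix_apply]
      · intro i _ hij
        rw [← LinearMap.toMatrix_apply b b A, hbD hij, zero_smul]
      · intro hni; exact absurd (Finset.mem_univ j) hni
    exact Submodule.mem_iSup_of_mem ((LinearMap.toMatrix b b A) j j)
      (Module.End.mem_eigenspace_iff.mpr hbj)
  · intro μ hμ
    have h1 : Module.finrank K (Module.End.eigenspace A μ) ≤ 1 :=
      hess_eigenspace_le_one A c hcH μ
    have h2 : 0 < Module.finrank K (Module.End.eigenspace A μ) := by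
      rw [Module.finrank_pos_iff_exists_ne_zero]
      obtain ⟨x, hx, hx0⟩ := hμ.exists_hasEigenvector
      exact ⟨⟨x, hx⟩, by simpa using hx0⟩
    omega
end

section
/- Let A, A* be a thin Hessenberg pair on V. If {θ_i}_{i=0}^d and {θ'_i}_{i=0}^d are two eigenvalue sequences of A, A* with θ_0 = θ'_0, then θ_i = θ'_i for 0 ≤ i ≤ d. -/
/-- A thin Hessenberg system on `V`: multiplicity-free `A`, `Astar` with
orderings of primitive idempotents `E`, `Estar` (eigenvalues `θ`, `θs`)
satisfying the Hessenberg conditions. -/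
structure THSystem (K V : Type*) [Field K] [AddCommGroup V] [Module K V] (d : ℕ) where
  A : Module.End K V
  Astar : Module.End K V
  E : Fin (d + 1) → Module.End K V
  Estar : Fin (d + 1) → Module.End K V
  θ : Fin (d + 1) → K
  θs : Fin (d + 1) → K
  finrank_eq : Module.finrank K V = d + 1
  θ_inj : Function.Injective θ
  θs_inj : Function.Injective θs
  sum_E : ∑ i, E i = 1
  E_mul : ∀ i j, E i * E j = if i = j then E i else 0
  E_ne : ∀ i, E i ≠ 0
  sum_Es : ∑ i, Estar i = 1
  Es_mul : ∀ i j, Estar i * Estar j = if i = j then Estar i else 0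
  Es_ne : ∀ i, Estar i ≠ 0
  A_eq : A = ∑ i, θ i • E i
  As_eq : Astar = ∑ i, θs i • Estar i
  EAsE_zero : ∀ i j : Fin (d + 1), (j : ℕ) + 1 < (i : ℕ) → E i * Astar * E j = 0
  EAsE_ne : ∀ i j : Fin (d + 1), (i : ℕ) = (j : ℕ) + 1 → E i * Astar * E j ≠ 0
  EsAEs_zero : ∀ i j : Fin (d + 1), (j : ℕ) + 1 < (i : ℕ) → Estar i * A * Estar j = 0
  EsAEs_ne : ∀ i j : Fin (d + 1), (i : ℕ) = (j : ℕ) + 1 → Estar i * A * Estar j ≠ 0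

namespace THSystem

variable {K V : Type*} [Field K] [AddCommGroup V] [Module K V] {d : ℕ}

lemma E_mul_A (Φ : THSystem K V d) (i : Fin (d + 1)) :
    Φ.E i * Φ.A = Φ.θ i • Φ.E i := by
  rw [Φ.A_eq, Finset.mul_sum]
  rw [Finset.sum_eq_single i]
  · rw [mul_smul_comm, Φ.E_mul, if_pos rfl]
  · intro j _ hj
    rw [mul_smul_comm, Φ.E_mul, if_neg (fun h => hj h.symm), smul_zero]
  · intro h; exact absurd (Finset.mem_univ i) h

lemma A_mul_E (Φ : THSystem K V d) (j : Fin (d + 1)) :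
    Φ.A * Φ.E j = Φ.θ j • Φ.E j := by
  rw [Φ.A_eq, Finset.sum_mul]
  rw [Finset.sum_eq_single j]
  · rw [smul_mul_assoc, Φ.E_mul, if_pos rfl]
  · intro i _ hi
    rw [smul_mul_assoc, Φ.E_mul, if_neg hi, smul_zero]
  · intro h; exact absurd (Finset.mem_univ j) h

lemma cross_zero (Φ Ψ : THSystem K V d) (hA : Ψ.A = Φ.A)
    (i j : Fin (d + 1)) (hne : Ψ.θ i ≠ Φ.θ j) : Ψ.E i * Φ.E j = 0 := by
  have h1 : Ψ.θ i • (Ψ.E i * Φ.E j) = Φ.θ j • (Ψ.E i * Φ.E j) := by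
    calc Ψ.θ i • (Ψ.E i * Φ.E j) = (Ψ.θ i • Ψ.E i) * Φ.E j := (smul_mul_assoc _ _ _).symm
    _ = (Ψ.E i * Ψ.A) * Φ.E j := by rw [Ψ.E_mul_A]
    _ = Ψ.E i * (Φ.A * Φ.E j) := by rw [hA, mul_assoc]
    _ = Φ.θ j • (Ψ.E i * Φ.E j) := by rw [Φ.A_mul_E, mul_smul_comm]
  have h2 : (Ψ.θ i - Φ.θ j) • (Ψ.E i * Φ.E j) = 0 := by
    rw [sub_smul, h1, sub_self]
  have hc : Ψ.θ i - Φ.θ j ≠ 0 := sub_ne_zero.mpr hne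
  have := congrArg (fun y => (Ψ.θ i - Φ.θ j)⁻¹ • y) h2
  simpa [smul_smul, inv_mul_cancel₀ hc] using this

lemma exists_match (Φ Ψ : THSystem K V d) (hA : Ψ.A = Φ.A) (i : Fin (d + 1)) :
    ∃ j, Ψ.θ i = Φ.θ j := by
  by_contra hcon
  push_neg at hcon
  apply Ψ.E_ne i
  have h1 : Ψ.E i = Ψ.E i * (∑ j, Φ.E j) := by rw [Φ.sum_E, mul_one]
  rw [Finset.mul_sum] at h1
  rw [h1]
  exact Finset.sum_eq_zero fun j _ => cross_zero Φ Ψ hA i j (hcon j)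

lemma E_eq (Φ Ψ : THSystem K V d) (hA : Ψ.A = Φ.A) (i j : Fin (d + 1))
    (hij : Ψ.θ i = Φ.θ j) : Ψ.E i = Φ.E j := by
  have h1 : Ψ.E i = Ψ.E i * Φ.E j := by
    have hs : ∑ k, Ψ.E i * Φ.E k = Ψ.E i * Φ.E j :=
      Finset.sum_eq_single j
        (fun k _ hk => cross_zero Φ Ψ hA i k
          (fun hcon => hk (Φ.θ_inj (hij.symm.trans hcon)).symm))
        (fun hj => absurd (Finset.mem_univ j) hj)
    calc Ψ.E i = Ψ.E i * (∑ k, Φ.E k) := by rw [Φ.sum_E, mul_one]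
    _ = ∑ k, Ψ.E i * Φ.E k := Finset.mul_sum _ _ _
    _ = Ψ.E i * Φ.E j := hs
  have h2 : Φ.E j = Ψ.E i * Φ.E j := by
    have hs : ∑ k, Ψ.E k * Φ.E j = Ψ.E i * Φ.E j :=
      Finset.sum_eq_single i
        (fun k _ hk => cross_zero Φ Ψ hA k j
          (fun hcon => hk (Ψ.θ_inj (hcon.trans hij.symm))))
        (fun hi => absurd (Finset.mem_univ i) hi)
    calc Φ.E j = (∑ k, Ψ.E k) * Φ.E j := by rw [Ψ.sum_E, one_mul]
    _ = ∑ k, Ψ.E k * Φ.E j := Finset.sum_mul _ _ _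
    _ = Ψ.E i * Φ.E j := hs
  rw [h1, ← h2]

end THSystem

/-- Two eigenvalue sequences of a TH pair agreeing at index 0 are equal. -/
theorem eigenvalue_sequence_unique {K V : Type*} [Field K] [AddCommGroup V] [Module K V]
    {d : ℕ} (A Astar : Module.End K V) (h : IsTHPair d A Astar)
    (θ θ' : Fin (d + 1) → K)
    (hθ : ∃ Φ : THSystem K V d, Φ.A = A ∧ Φ.Astar = Astar ∧ Φ.θ = θ)
    (hθ' : ∃ Φ : THSystem K V d, Φ.A = A ∧ Φ.Astar = Astar ∧ Φ.θ = θ')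
    (h0 : θ 0 = θ' 0) :
    θ = θ' := by
  obtain ⟨Φ, hΦA, hΦAs, hΦθ⟩ := hθ
  obtain ⟨Ψ, hΨA, hΨAs, hΨθ⟩ := hθ'
  subst hΦθ hΨθ
  have hA : Ψ.A = Φ.A := hΨA.trans hΦA.symm
  have hAs : Ψ.Astar = Φ.Astar := hΨAs.trans hΦAs.symm
  -- the permutation σ
  have hex := fun i => THSystem.exists_match Φ Ψ hA i
  set σ : Fin (d + 1) → Fin (d + 1) := fun i => (hex i).choose with hσdef
  have hσθ : ∀ i, Ψ.θ i = Φ.θ (σ i) := fun i => (hex i).choose_spec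
  have hσE : ∀ i, Ψ.E i = Φ.E (σ i) := fun i => THSystem.E_eq Φ Ψ hA i (σ i) (hσθ i)
  have hσinj : Function.Injective σ := by
    intro i j hij
    exact Ψ.θ_inj (by rw [hσθ i, hσθ j, hij])
  have hσ0 : σ 0 = 0 := Φ.θ_inj (by rw [← hσθ 0, ← h0])
  -- σ is the identity, by strong induction
  have hσid : ∀ k : ℕ, ∀ hk : k < d + 1, σ ⟨k, hk⟩ = ⟨k, hk⟩ := by
    intro k
    induction k using Nat.strong_induction_on with
    | _ k ih =>
      intro hk
      rcases k with _ | m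
      · simpa using hσ0
      · 
        have hm : m < d + 1 := Nat.lt_of_succ_lt hk
        have hne := Ψ.EAsE_ne ⟨m + 1, hk⟩ ⟨m, hm⟩ rfl
        rw [hσE, hσE, hAs, ih m (Nat.lt_succ_self m) hm] at hne
        -- so Φ.E (σ ⟨m+1,hk⟩) * Φ.Astar * Φ.E ⟨m,hm⟩ ≠ 0
        have hle : (σ ⟨m + 1, hk⟩ : ℕ) ≤ m + 1 := by
          by_contra hgt
          push_neg at hgt
          exact hne (Φ.EAsE_zero _ _ hgt)
        rcases Nat.lt_or_ge (σ ⟨m + 1, hk⟩ : ℕ) (m + 1) with hlt | hge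
        · exfalso
          have hlt' : (σ ⟨m + 1, hk⟩ : ℕ) < d + 1 := (σ ⟨m + 1, hk⟩).2
          have heq : σ ⟨(σ ⟨m + 1, hk⟩ : ℕ), hlt'⟩ = σ ⟨m + 1, hk⟩ := by
            rw [ih _ hlt hlt']
          have h2 := hσinj heq
          exact absurd (congrArg Fin.val h2) (Nat.ne_of_lt hlt)
        · exact Fin.ext (le_antisymm hle hge)
  funext i
  have : σ i = i := by
    have := hσid i.1 i.2
    simpa using this
  rw [hσθ i, this]
end

section
/- Let A, A* be a thin Hessenberg pair on V. Fix a basis of V and let B (resp. B*) be the matrix representing A (resp. A*) with respect to that basis. Assume B is Hessenberg and B* is upper triangular. Then the sequence of diagonal entries {B*_{ii}}_{i=0}^d is a dual eigenvalue sequence of A, A*; that is, writing E*_i for the primitive idempotent of A* with eigenvalue B*_{ii}, one has E*_i A E*_j = 0 if i - j > 1 and E*_i A E*_j ≠ 0 if i - j = 1. -/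
open Polynomial

lemma aeval_idem {K R : Type*} [Field K] [Ring R] [Algebra K R]
    {ι : Type*} [Fintype ι] [DecidableEq ι]
    (F : ι → R) (θ : ι → K)
    (hsum : ∑ i, F i = 1)
    (hmul : ∀ i j, F i * F j = if i = j then F i else 0)
    (x : R) (hx : x = ∑ i, θ i • F i) (p : K[X]) :
    aeval x p = ∑ i, p.eval (θ i) • F i := by
  have key : ∀ (c c' : ι → K),
      (∑ m, c m • F m) * (∑ m, c' m • F m) = ∑ m, (c m * c' m) • F m := by
    intro c c'
    rw [Finset.sum_mul]
    refine Finset.sum_congr rfl fun m _ => ?_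
    rw [Finset.mul_sum]
    rw [Finset.sum_eq_single m]
    · rw [smul_mul_smul_comm, hmul, if_pos rfl]
    · intro k _ hk
      rw [smul_mul_smul_comm, hmul, if_neg (Ne.symm hk), smul_zero]
    · intro hm; exact absurd (Finset.mem_univ m) hm
  have hpow : ∀ n : ℕ, x ^ n = ∑ m, (θ m ^ n) • F m := by
    intro n; induction n with
    | zero => simpa using hsum.symm
    | succ n ih =>
      rw [pow_succ, ih, hx, key]
      exact Finset.sum_congr rfl fun m _ => by rw [pow_succ]
  induction p using Polynomial.induction_on' with
  | add p q hp hq =>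
    rw [map_add, hp, hq, ← Finset.sum_add_distrib]
    exact Finset.sum_congr rfl fun m _ => by rw [eval_add, add_smul]
  | monomial n a =>
    rw [aeval_monomial, ← Algebra.smul_def, hpow, Finset.smul_sum]
    exact Finset.sum_congr rfl fun m _ => by
      rw [eval_monomial, smul_smul]

lemma prod_col_zero {K : Type*} [Field K] {d : ℕ}
    (Bs : Matrix (Fin (d+1)) (Fin (d+1)) K)
    (hBs : ∀ i j : Fin (d+1), j < i → Bs i j = 0)
    (θ : Fin (d+1) → K) (hdiag : ∀ k, θ k = Bs k k) :
    ∀ N : ℕ, ∀ s : Fin (d+1), (s : ℕ) < N → ∀ T : Finset (Fin (d+1)),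
      (∀ l, l ≤ s → l ∈ T) →
      ∀ r, (aeval Bs (∏ k ∈ T, (X - C (θ k)))) r s = 0 := by
  intro N
  induction N with
  | zero => intro s hs; omega
  | succ N ih =>
    intro s hs T hT r
    have hsT : s ∈ T := hT s le_rfl
    rw [← Finset.prod_erase_mul T _ hsT, map_mul, Matrix.mul_apply]
    refine Finset.sum_eq_zero fun l _ => ?_
    rcases lt_trichotomy l s with hls | hls | hls
    · have hM : (aeval Bs (∏ k ∈ T.erase s, (X - C (θ k)))) r l = 0 := by
        refine ih l (by omega) (T.erase s) (fun m hm => ?_) r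
        exact Finset.mem_erase.2 ⟨ne_of_lt (lt_of_le_of_lt hm hls),
          hT m (le_of_lt (lt_of_le_of_lt hm hls))⟩
      rw [hM, zero_mul]
    · subst hls
      have : (aeval Bs (X - C (θ l))) l l = 0 := by
        simp [map_sub, Algebra.algebraMap_eq_smul_one, Matrix.sub_apply,
          Matrix.smul_apply, Matrix.one_apply, hdiag l]
      rw [this, mul_zero]
    · have : (aeval Bs (X - C (θ s))) l s = 0 := by
        simp [map_sub, Algebra.algebraMap_eq_smul_one, Matrix.sub_apply,
          Matrix.smul_apply, Matrix.one_apply, hBs l s hls, Fin.ne_of_gt hls]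
      rw [this, mul_zero]

lemma prod_row_zero {K : Type*} [Field K] {d : ℕ}
    (Bs : Matrix (Fin (d+1)) (Fin (d+1)) K)
    (hBs : ∀ i j : Fin (d+1), j < i → Bs i j = 0)
    (θ : Fin (d+1) → K) (hdiag : ∀ k, θ k = Bs k k) :
    ∀ N : ℕ, ∀ s : Fin (d+1), d - (s : ℕ) < N → ∀ T : Finset (Fin (d+1)),
      (∀ l, s ≤ l → l ∈ T) →
      ∀ cc, (aeval Bs (∏ k ∈ T, (X - C (θ k)))) s cc = 0 := by
  intro N
  induction N with
  | zero => intro s hs; omega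
  | succ N ih =>
    intro s hs T hT cc
    have hsT : s ∈ T := hT s le_rfl
    rw [← Finset.mul_prod_erase T _ hsT, map_mul, Matrix.mul_apply]
    refine Finset.sum_eq_zero fun l _ => ?_
    rcases lt_trichotomy l s with hls | hls | hls
    · have : (aeval Bs (X - C (θ s))) s l = 0 := by
        simp [map_sub, Algebra.algebraMap_eq_smul_one, Matrix.sub_apply,
          Matrix.smul_apply, Matrix.one_apply, hBs s l hls, Fin.ne_of_gt hls]
      rw [this, zero_mul]
    · subst hls
      have : (aeval Bs (X - C (θ l))) l l = 0 := by
        simp [map_sub, Algebra.algebraMap_eq_smul_one, Matrix.sub_apply,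
          Matrix.smul_apply, Matrix.one_apply, hdiag l]
      rw [this, zero_mul]
    · have hM : (aeval Bs (∏ k ∈ T.erase s, (X - C (θ k)))) l cc = 0 := by
        have hl : (l : ℕ) ≤ d := Nat.lt_succ_iff.mp l.isLt
        have hsl : (s : ℕ) < (l : ℕ) := hls
        refine ih l (by omega) (T.erase s) (fun m hm => ?_) cc
        exact Finset.mem_erase.2 ⟨ne_of_gt (lt_of_lt_of_le hls hm),
          hT m (le_of_lt (lt_of_lt_of_le hls hm))⟩
      rw [hM, mul_zero]

lemma hess_pow {K : Type*} [Field K] {d : ℕ}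
    (H : Matrix (Fin (d+1)) (Fin (d+1)) K)
    (h1 : ∀ i j : Fin (d+1), (j : ℕ) + 1 < (i : ℕ) → H i j = 0)
    (h2 : ∀ i j : Fin (d+1), (i : ℕ) = (j : ℕ) + 1 → H i j ≠ 0) :
    ∀ m : ℕ, (∀ r : Fin (d+1), m < (r : ℕ) → (H ^ m) r 0 = 0) ∧
      (∀ r : Fin (d+1), (r : ℕ) = m → (H ^ m) r 0 ≠ 0) := by
  intro m
  induction m with
  | zero =>
    constructor
    · intro r hr
      rw [pow_zero, Matrix.one_apply]
      have : r ≠ 0 := by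
        intro h; rw [h] at hr; simp at hr
      simp [this]
    · intro r hr
      have : r = 0 := Fin.ext (by simpa using hr)
      rw [pow_zero, this, Matrix.one_apply_eq]
      exact one_ne_zero
  | succ m ih =>
    constructor
    · intro r hr
      rw [pow_succ', Matrix.mul_apply]
      refine Finset.sum_eq_zero fun l _ => ?_
      rcases le_or_gt (l : ℕ) m with hl | hl
      · rw [h1 r l (by omega), zero_mul]
      · rw [ih.1 l hl, mul_zero]
    · intro r hr
      have hm : m < d + 1 := by omega
      set l0 : Fin (d+1) := ⟨m, hm⟩ with hl0
      rw [pow_succ', Matrix.mul_apply]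
      rw [Finset.sum_eq_single l0]
      · exact mul_ne_zero (h2 r l0 (by simp [hl0, hr])) (ih.2 l0 (by simp [hl0]))
      · intro l _ hl
        have hlm : (l : ℕ) ≠ m := fun h => hl (Fin.ext (by simp [hl0, h]))
        rcases lt_or_gt_of_ne hlm with h' | h'
        · rw [h1 r l (by omega), zero_mul]
        · rw [ih.1 l h', mul_zero]
      · intro h; exact absurd (Finset.mem_univ l0) h

lemma diag_inj {K : Type*} [Field K] {d : ℕ}
    (Bs H : Matrix (Fin (d+1)) (Fin (d+1)) K)
    (F : Fin (d+1) → Matrix (Fin (d+1)) (Fin (d+1)) K)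
    (hH1 : ∀ i j : Fin (d+1), (j : ℕ) + 1 < (i : ℕ) → H i j = 0)
    (hH2 : ∀ i j : Fin (d+1), (i : ℕ) = (j : ℕ) + 1 → H i j ≠ 0)
    (hFsum : ∑ i, F i = 1)
    (hFmul : ∀ i j, F i * F j = if i = j then F i else 0)
    (hBsF : Bs = ∑ i, Bs i i • F i)
    (hsim : ∀ p : K[X], aeval Bs p = 0 → aeval H p = 0) :
    ∀ i j : Fin (d+1), Bs i i = Bs j j → i = j := by
  intro i j hij
  by_contra hne'
  set q : K[X] := ∏ k ∈ Finset.univ.erase j, (X - C (Bs k k)) with hq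
  have hev : ∀ m, eval (Bs m m) q = 0 := by
    intro m
    rw [hq, eval_prod]
    by_cases hm : m = j
    · refine Finset.prod_eq_zero (Finset.mem_erase.2 ⟨hne', Finset.mem_univ i⟩) ?_
      rw [eval_sub, eval_X, eval_C, hm, hij, sub_self]
    · exact Finset.prod_eq_zero (Finset.mem_erase.2 ⟨hm, Finset.mem_univ m⟩)
        (by rw [eval_sub, eval_X, eval_C, sub_self])
  have hBq : aeval Bs q = 0 := by
    rw [aeval_idem F (fun i => Bs i i) hFsum hFmul Bs hBsF q]
    exact Finset.sum_eq_zero fun m _ => by rw [hev m, zero_smul]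
  have hHq := hsim q hBq
  have hmon : q.Monic := monic_prod_of_monic _ _ fun k _ => monic_X_sub_C _
  have hdeg : q.natDegree = d := by
    rw [hq, natDegree_prod_of_monic _ _ fun k _ => monic_X_sub_C _]
    simp [natDegree_X_sub_C, Finset.card_erase_of_mem]
  have hpl := hess_pow H hH1 hH2
  have hz := congrFun (congrFun hHq (Fin.last d)) 0
  rw [aeval_eq_sum_range, hdeg, Matrix.sum_apply, Matrix.zero_apply] at hz
  rw [Finset.sum_eq_single d] at hz
  · rw [Matrix.smul_apply, smul_eq_mul] at hz
    have hc : q.coeff d = 1 := by rw [← hdeg]; exact hmon.coeff_natDegree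
    rw [hc, one_mul] at hz
    exact (hpl d).2 (Fin.last d) (by simp) hz
  · intro m hm hmd
    have hmd' : m < d := by rw [Finset.mem_range] at hm; omega
    rw [Matrix.smul_apply, (hpl m).1 (Fin.last d) (by simpa using hmd'), smul_zero]
  · intro hd; exact absurd (Finset.mem_range.mpr (by omega)) hd

lemma matrix_main {K : Type*} [Field K] {d : ℕ}
    (Bm Bs : Matrix (Fin (d+1)) (Fin (d+1)) K)
    (F : Fin (d+1) → Matrix (Fin (d+1)) (Fin (d+1)) K)
    (hBlow : ∀ i j : Fin (d+1), (j : ℕ) + 1 < (i : ℕ) → Bm i j = 0)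
    (hBsub : ∀ i j : Fin (d+1), (i : ℕ) = (j : ℕ) + 1 → Bm i j ≠ 0)
    (hBs : ∀ i j : Fin (d+1), j < i → Bs i j = 0)
    (hFsum : ∑ i, F i = 1)
    (hFmul : ∀ i j, F i * F j = if i = j then F i else 0)
    (hBsF : Bs = ∑ i, Bs i i • F i)
    (hinj : ∀ i j : Fin (d+1), Bs i i = Bs j j → i = j) :
    (∀ i j : Fin (d+1), (j : ℕ) + 1 < (i : ℕ) → F i * Bm * F j = 0) ∧
    (∀ i j : Fin (d+1), (i : ℕ) = (j : ℕ) + 1 → F i * Bm * F j ≠ 0) := by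
  classical
  have haev : ∀ p : K[X], aeval Bs p = ∑ i, p.eval (Bs i i) • F i :=
    fun p => aeval_idem F (fun i => Bs i i) hFsum hFmul Bs hBsF p
  have hFrep : ∀ i : Fin (d+1),
      (∀ r k, k < i → F i r k = 0) ∧ (∀ l cc, i < l → F i l cc = 0) := by
    intro i
    set s1 : Finset (Fin (d+1)) := Finset.univ.filter (· < i) with hs1
    set s2 : Finset (Fin (d+1)) := Finset.univ.filter (i < ·) with hs2
    have hdisj : Disjoint s1 s2 := by
      rw [Finset.disjoint_left]
      intro a ha1 ha2
      rw [hs1, Finset.mem_filter] at ha1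
      rw [hs2, Finset.mem_filter] at ha2
      exact absurd (ha1.2.trans ha2.2) (lt_irrefl a)
    have hunion : Finset.univ.erase i = s1 ∪ s2 := by
      ext a
      simp only [hs1, hs2, Finset.mem_erase, Finset.mem_union, Finset.mem_filter,
        Finset.mem_univ, true_and, and_true]
      exact ⟨fun h => lt_or_gt_of_ne h, fun h => h.elim ne_of_lt ne_of_gt⟩
    have hCne : (∏ k ∈ Finset.univ.erase i, (Bs i i - Bs k k)) ≠ 0 := by
      refine Finset.prod_ne_zero_iff.mpr fun k hk => ?_
      rw [Finset.mem_erase] at hk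
      exact sub_ne_zero.mpr fun he => hk.1 ((hinj i k he).symm)
    have hPF : aeval Bs (∏ k ∈ Finset.univ.erase i, (X - C (Bs k k))) =
        (∏ k ∈ Finset.univ.erase i, (Bs i i - Bs k k)) • F i := by
      rw [haev, Finset.sum_eq_single i]
      · rw [eval_prod]
        simp only [eval_sub, eval_X, eval_C]
      · intro m _ hm
        have : eval (Bs m m) (∏ k ∈ Finset.univ.erase i, (X - C (Bs k k))) = 0 := by
          rw [eval_prod]
          exact Finset.prod_eq_zero (Finset.mem_erase.2 ⟨hm, Finset.mem_univ m⟩)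
            (by rw [eval_sub, eval_X, eval_C, sub_self])
        rw [this, zero_smul]
      · intro h; exact absurd (Finset.mem_univ i) h
    have hrep : F i = (∏ k ∈ Finset.univ.erase i, (Bs i i - Bs k k))⁻¹ •
        aeval Bs (∏ k ∈ Finset.univ.erase i, (X - C (Bs k k))) := by
      rw [hPF, smul_smul, inv_mul_cancel₀ hCne, one_smul]
    have hsplit : (∏ k ∈ Finset.univ.erase i, (X - C (Bs k k))) =
        (∏ k ∈ s2, (X - C (Bs k k))) * (∏ k ∈ s1, (X - C (Bs k k))) := by
      rw [hunion, Finset.prod_union hdisj, mul_comm]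
    constructor
    · intro r k hk
      rw [hrep, hsplit, map_mul, Matrix.smul_apply, Matrix.mul_apply, smul_eq_mul]
      have hz : ∀ l, (aeval Bs (∏ k ∈ s1, (X - C (Bs k k)))) l k = 0 := by
        intro l
        refine prod_col_zero Bs hBs (fun m => Bs m m) (fun _ => rfl) (d+1) k k.isLt
          s1 (fun m hm => ?_) l
        rw [hs1, Finset.mem_filter]
        exact ⟨Finset.mem_univ m, lt_of_le_of_lt hm hk⟩
      rw [Finset.sum_eq_zero fun l _ => by rw [hz l, mul_zero], mul_zero]
    · intro l cc hl
      rw [hrep, hsplit, map_mul, Matrix.smul_apply, Matrix.mul_apply, smul_eq_mul]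
      have hz : ∀ m, (aeval Bs (∏ k ∈ s2, (X - C (Bs k k)))) l m = 0 := by
        intro m
        refine prod_row_zero Bs hBs (fun m => Bs m m) (fun _ => rfl) (d+1) l
          (by omega) s2 (fun m hm => ?_) m
        rw [hs2, Finset.mem_filter]
        exact ⟨Finset.mem_univ m, lt_of_lt_of_le hl hm⟩
      rw [Finset.sum_eq_zero fun m _ => by rw [hz m, zero_mul], mul_zero]
  have diagF : ∀ j : Fin (d+1), F j j j = 1 := by
    intro j
    have h1 : (∑ k, F k) j j = (1 : Matrix (Fin (d+1)) (Fin (d+1)) K) j j := by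
      rw [hFsum]
    rw [Matrix.sum_apply, Matrix.one_apply_eq] at h1
    rw [Finset.sum_eq_single j] at h1
    · exact h1
    · intro k _ hk
      rcases lt_or_gt_of_ne hk with h' | h'
      · exact (hFrep k).2 j j h'
      · exact (hFrep k).1 j j h'
    · intro hj; exact absurd (Finset.mem_univ j) hj
  constructor
  · intro i j hij
    ext r s
    rw [Matrix.mul_apply, Matrix.zero_apply]
    refine Finset.sum_eq_zero fun l _ => ?_
    rcases le_or_gt (l : ℕ) (j : ℕ) with hl | hl
    · have : (F i * Bm) r l = 0 := by
        rw [Matrix.mul_apply]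
        refine Finset.sum_eq_zero fun k _ => ?_
        rcases lt_or_ge k i with hk | hk
        · rw [(hFrep i).1 r k hk, zero_mul]
        · rw [hBlow k l (by have := Fin.le_def.mp hk; omega), mul_zero]
      rw [this, zero_mul]
    · rw [(hFrep j).2 l s (Fin.lt_def.mpr hl), mul_zero]
  · intro i j hij
    have step1 : (F i * Bm * F j) i j = (F i * Bm) i j := by
      rw [Matrix.mul_apply, Finset.sum_eq_single j]
      · rw [diagF j, mul_one]
      · intro l _ hl
        rcases lt_or_gt_of_ne hl with h' | h'
        · have : (F i * Bm) i l = 0 := by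
            rw [Matrix.mul_apply]
            refine Finset.sum_eq_zero fun k _ => ?_
            rcases lt_or_ge k i with hk | hk
            · rw [(hFrep i).1 i k hk, zero_mul]
            · rw [hBlow k l (by
                have h1 := Fin.le_def.mp hk
                have h2 := Fin.lt_def.mp h'
                omega), mul_zero]
          rw [this, zero_mul]
        · rw [(hFrep j).2 l j h', mul_zero]
      · intro hj; exact absurd (Finset.mem_univ j) hj
    have step2 : (F i * Bm) i j = Bm i j := by
      rw [Matrix.mul_apply, Finset.sum_eq_single i]
      · rw [diagF i, one_mul]
      · intro k _ hk
        rcases lt_or_gt_of_ne hk with h' | h'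
        · rw [(hFrep i).1 i k h', zero_mul]
        · rw [hBlow k j (by have := Fin.lt_def.mp h'; omega), mul_zero]
      · intro hi; exact absurd (Finset.mem_univ i) hi
    intro hcon
    have hz : Bm i j = 0 := by
      have h0 := congrFun (congrFun hcon i) j
      rwa [step1, step2, Matrix.zero_apply] at h0
    exact hBsub i j hij hz

/-- If `B` (the matrix of `A`) is Hessenberg and `B*` (the matrix of `A*`) is
upper triangular, then the diagonal of `B*` is a dual eigenvalue sequence:
the corresponding primitive idempotents `Es` of `A*` satisfy
`Es_i A Es_j = 0` for `i - j > 1` and `Es_i A Es_j ≠ 0` for `i - j = 1`. -/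
theorem diag_is_dual_eigenvalue_sequence {K V : Type*} [Field K] [AddCommGroup V]
    [Module K V] {d : ℕ} (A Astar : Module.End K V) (h : IsTHPair d A Astar)
    (b : Module.Basis (Fin (d + 1)) K V)
    (hB : IsHessenberg (LinearMap.toMatrix b b A))
    (hBs : ∀ i j : Fin (d + 1), j < i → LinearMap.toMatrix b b Astar i j = 0)
    (Es : Fin (d + 1) → Module.End K V)
    (hsum : ∑ i, Es i = 1)
    (hmul : ∀ i j, Es i * Es j = if i = j then Es i else 0)
    (hne : ∀ i, Es i ≠ 0)
    (hAs : Astar = ∑ i, LinearMap.toMatrix b b Astar i i • Es i) :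
    (∀ i j : Fin (d + 1), (j : ℕ) + 1 < (i : ℕ) → Es i * A * Es j = 0) ∧
    (∀ i j : Fin (d + 1), (i : ℕ) = (j : ℕ) + 1 → Es i * A * Es j ≠ 0) := by
  classical
  obtain ⟨c, -, hH⟩ := h.2
  have hFsum' : ∑ i, LinearMap.toMatrix b b (Es i)
      = (1 : Matrix (Fin (d+1)) (Fin (d+1)) K) := by
    calc ∑ i, LinearMap.toMatrix b b (Es i)
        = (LinearMap.toMatrixAlgEquiv b) (∑ i, Es i) := (map_sum (LinearMap.toMatrixAlgEquiv b) _ _).symm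
      _ = 1 := by rw [hsum, map_one]
  have hFmul' : ∀ i j, LinearMap.toMatrix b b (Es i) * LinearMap.toMatrix b b (Es j) =
      if i = j then LinearMap.toMatrix b b (Es i) else 0 := by
    intro i j
    calc LinearMap.toMatrix b b (Es i) * LinearMap.toMatrix b b (Es j)
        = (LinearMap.toMatrixAlgEquiv b) (Es i * Es j) := (map_mul (LinearMap.toMatrixAlgEquiv b) _ _).symm
      _ = _ := by
          rw [hmul i j]
          split
          · rfl
          · exact map_zero _
  have hBsF' : LinearMap.toMatrix b b Astar =
      ∑ i, (LinearMap.toMatrix b b Astar) i i • LinearMap.toMatrix b b (Es i) := by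
    calc LinearMap.toMatrix b b Astar
        = (LinearMap.toMatrixAlgEquiv b)
            (∑ i, (LinearMap.toMatrix b b Astar) i i • Es i) := by rw [← hAs]; rfl
      _ = _ := by
          rw [map_sum]
          exact Finset.sum_congr rfl fun i _ => map_smul _ _ _
  have hsim : ∀ p : K[X], aeval (LinearMap.toMatrix b b Astar) p = 0 →
      aeval (LinearMap.toMatrix c c Astar) p = 0 := by
    intro p hp
    have h1 : (LinearMap.toMatrixAlgEquiv b) (aeval Astar p) = 0 :=
      (aeval_algHom_apply (LinearMap.toMatrixAlgEquiv b) Astar p).symm.trans hp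
    have h2 : aeval Astar p = 0 :=
      (LinearMap.toMatrixAlgEquiv b).injective (by rw [map_zero]; exact h1)
    calc aeval (LinearMap.toMatrix c c Astar) p
        = (LinearMap.toMatrixAlgEquiv c) (aeval Astar p) := aeval_algHom_apply (LinearMap.toMatrixAlgEquiv c) _ _
      _ = 0 := by rw [h2, map_zero]
  have hinj := diag_inj (LinearMap.toMatrix b b Astar) (LinearMap.toMatrix c c Astar)
    (fun i => LinearMap.toMatrix b b (Es i)) hH.1 hH.2 hFsum' hFmul' hBsF' hsim
  have hmain := matrix_main (LinearMap.toMatrix b b A) (LinearMap.toMatrix b b Astar)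
    (fun i => LinearMap.toMatrix b b (Es i)) hB.1 hB.2 hBs hFsum' hFmul' hBsF' hinj
  constructor
  · intro i j hij
    apply (LinearMap.toMatrixAlgEquiv b).injective
    rw [map_zero, map_mul, map_mul]
    exact hmain.1 i j hij
  · intro i j hij hcon
    refine hmain.2 i j hij ?_
    have h0 := congrArg (LinearMap.toMatrixAlgEquiv b) hcon
    rwa [map_zero, map_mul, map_mul] at h0
end

section
/- Let Φ be a TH system on V with eigenvalue sequence {θ_i} and dual eigenvalue sequence {θ*_i}. For any nonzero η_0 in E_0 V, the vectors v_i = (A* - θ*_{i+1} I)(A* - θ*_{i+2} I)···(A* - θ*_d I) η_0 for 0 ≤ i ≤ d form a basis of V. -/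
set_option maxHeartbeats 1000000 in
/-- For nonzero `η₀ ∈ E_0 V`, the vectors
`v_i = (A* - θ*_{i+1} I) ⋯ (A* - θ*_d I) η₀` form a basis of `V`. -/
theorem split_vectors_form_basis {K V : Type*} [Field K] [AddCommGroup V] [Module K V]
    {d : ℕ} (Φ : THSystem K V d) (η₀ : V) (hη : η₀ ≠ 0)
    (hmem : η₀ ∈ LinearMap.range (Φ.E 0))
    (v : Fin (d + 1) → V) (hvd : v (Fin.last d) = η₀)
    (hrec : ∀ i : ℕ, ∀ h : i < d, v ⟨i, by omega⟩ =
      (Φ.Astar - Φ.θs ⟨i + 1, by omega⟩ • (1 : Module.End K V)) (v ⟨i + 1, by omega⟩)) :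
    LinearIndependent K v ∧ Submodule.span K (Set.range v) = ⊤ := by
  haveI : FiniteDimensional K V := FiniteDimensional.of_finrank_eq_succ Φ.finrank_eq
  -- basic idempotent facts
  have hEid : ∀ i (x : V), Φ.E i (Φ.E i x) = Φ.E i x := by
    intro i x
    have h := Φ.E_mul i i
    rw [if_pos rfl] at h
    rw [← Module.End.mul_apply, h]
  have hEE : ∀ i j, i ≠ j → ∀ x : V, Φ.E i (Φ.E j x) = 0 := by
    intro i j hij x
    have h := Φ.E_mul i j
    rw [if_neg hij] at h
    rw [← Module.End.mul_apply, h, LinearMap.zero_apply]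
  have hrange : ∀ i (x : V), x ∈ LinearMap.range (Φ.E i) → Φ.E i x = x := by
    rintro i x ⟨y, rfl⟩; exact hEid i y
  have hsum : ∀ x : V, ∑ i, Φ.E i x = x := by
    intro x
    have h := congrArg (fun f : Module.End K V => f x) Φ.sum_E
    simpa using h
  -- internal direct sum and rank one
  have hsupr : (⨆ i, LinearMap.range (Φ.E i)) = ⊤ := by
    rw [Submodule.eq_top_iff']
    intro x
    rw [← hsum x]
    exact Submodule.sum_mem _ fun i _ =>
      Submodule.mem_iSup_of_mem i (LinearMap.mem_range_self _ x)
  have hindep : iSupIndep (fun i => LinearMap.range (Φ.E i)) := by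
    intro i
    rw [Submodule.disjoint_def]
    intro x hx hx'
    have hker : (⨆ j ∈ ({i}ᶜ : Set (Fin (d+1))), LinearMap.range (Φ.E j)) ≤ LinearMap.ker (Φ.E i) := by
      refine iSup_le fun j => iSup_le fun hj => ?_
      rintro y ⟨z, rfl⟩
      exact hEE i j (fun h => hj (by simp [h])) z
    have : Φ.E i x = 0 := hker hx'
    rw [← hrange i x hx, this]
  have hInternal : DirectSum.IsInternal (fun i => LinearMap.range (Φ.E i)) :=
    (DirectSum.isInternal_submodule_iff_iSupIndep_and_iSup_eq_top _).mpr ⟨hindep, hsupr⟩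
  have hequiv := LinearEquiv.ofBijective (DirectSum.coeLinearMap _) hInternal
  have hsumrank : ∑ i, Module.finrank K (LinearMap.range (Φ.E i)) = d + 1 := by
    rw [← Module.finrank_directSum, hequiv.finrank_eq, Φ.finrank_eq]
  have hrpos : ∀ i, 1 ≤ Module.finrank K (LinearMap.range (Φ.E i)) := by
    intro i
    by_contra h
    have h0 : Module.finrank K (LinearMap.range (Φ.E i)) = 0 := by omega
    rw [Submodule.finrank_eq_zero, LinearMap.range_eq_bot] at h0
    exact Φ.E_ne i h0
  have hrank1 : ∀ i, Module.finrank K (LinearMap.range (Φ.E i)) = 1 := by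
    have h := (Finset.sum_eq_sum_iff_of_le (s := Finset.univ)
        (f := fun _ : Fin (d+1) => 1)
        (g := fun i => Module.finrank K (LinearMap.range (Φ.E i)))
        (fun i _ => hrpos i)).mp (by simp [hsumrank])
    intro i
    exact (h i (Finset.mem_univ i)).symm
  -- the key one-dimensionality consequence
  have hmul : ∀ (m : Fin (d+1)) (u : V), u ∈ LinearMap.range (Φ.E m) → u ≠ 0 →
      ∀ w ∈ LinearMap.range (Φ.E m), ∃ c : K, c • u = w := by
    intro m u hu hu0 w hw
    have h1 := (finrank_eq_one_iff_of_nonzero' (⟨u, hu⟩ : LinearMap.range (Φ.E m))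
      (by simpa [Subtype.ext_iff] using hu0)).mp (hrank1 m)
    obtain ⟨c, hc⟩ := h1 ⟨w, hw⟩
    exact ⟨c, congrArg Subtype.val hc⟩
  have hstep : ∀ (m m1 : Fin (d+1)), (m1 : ℕ) = (m : ℕ) + 1 → ∀ u : V,
      u ∈ LinearMap.range (Φ.E m) → u ≠ 0 → Φ.E m1 (Φ.Astar u) ≠ 0 := by
    intro m m1 hm1 u hu hu0 h0
    apply Φ.EAsE_ne m1 m hm1
    ext x
    rw [Module.End.mul_apply, Module.End.mul_apply]
    obtain ⟨c, hc⟩ := hmul m u hu hu0 (Φ.E m x) (LinearMap.mem_range_self _ x)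
    rw [← hc, map_smul, map_smul, h0, smul_zero, LinearMap.zero_apply]
  -- main descending induction
  have key : ∀ m : ℕ, (hm : m ≤ d) →
      (∀ j : Fin (d+1), m < (j : ℕ) →
        Φ.E j (v ⟨d - m, Nat.lt_succ_of_le (Nat.sub_le d m)⟩) = 0) ∧
      Φ.E ⟨m, Nat.lt_succ_of_le hm⟩ (v ⟨d - m, Nat.lt_succ_of_le (Nat.sub_le d m)⟩) ≠ 0 := by
    intro m
    induction m with
    | zero =>
      intro hm
      have hidx : (⟨d - 0, Nat.lt_succ_of_le (Nat.sub_le d 0)⟩ : Fin (d+1)) = Fin.last d := by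
        ext; simp
      have hv : v ⟨d - 0, Nat.lt_succ_of_le (Nat.sub_le d 0)⟩ = η₀ := by rw [hidx, hvd]
      have h00 : (⟨0, Nat.lt_succ_of_le hm⟩ : Fin (d+1)) = 0 := by ext; simp
      constructor
      · intro j hj
        obtain ⟨y, hy⟩ := hmem
        rw [hv, ← hy]
        exact hEE j 0 (by intro h; rw [h] at hj; simp at hj) y
      · rw [hv, h00, hrange 0 η₀ hmem]
        exact hη
    | succ m ih =>
      intro hm
      obtain ⟨ihA, ihB⟩ := ih (Nat.le_of_succ_le hm)
      have hd1 : d - (m + 1) < d := by omega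
      have hrel := hrec (d - (m + 1)) hd1
      have hidx : (⟨d - (m + 1) + 1, by omega⟩ : Fin (d+1)) =
          ⟨d - m, Nat.lt_succ_of_le (Nat.sub_le d m)⟩ := by
        ext; show d - (m+1) + 1 = d - m; omega
      rw [hidx] at hrel
      set w : V := v ⟨d - m, Nat.lt_succ_of_le (Nat.sub_le d m)⟩ with hw
      set c : K := Φ.θs ⟨d - m, by omega⟩ with hc
      have hrel' : v ⟨d - (m + 1), Nat.lt_succ_of_le (Nat.sub_le d (m+1))⟩ =
          Φ.Astar w - c • w := by
        rw [hrel]; simp [LinearMap.sub_apply, LinearMap.smul_apply]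
      -- components of Astar w
      have hAsw : ∀ j : Fin (d+1), (m : ℕ) + 1 ≤ (j : ℕ) →
          Φ.E j (Φ.Astar w) = Φ.E j (Φ.Astar (Φ.E ⟨m, by omega⟩ w)) := by
        intro j hj
        conv_lhs => rw [← hsum w]
        rw [map_sum, map_sum]
        rw [Finset.sum_eq_single (⟨m, by omega⟩ : Fin (d+1))]
        · intro k _ hk
          by_cases hkm : (k : ℕ) < m
          · have hop := Φ.EAsE_zero j k (by omega)
            rw [← Module.End.mul_apply, ← Module.End.mul_apply, hop, LinearMap.zero_apply]
          · have hkm' : m < (k : ℕ) := by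
              rcases Nat.lt_or_ge (k : ℕ) m with h | h
              · exact absurd h hkm
              · rcases Nat.eq_or_lt_of_le h with h' | h'
                · exact absurd (Fin.ext h'.symm : k = ⟨m, by omega⟩) hk
                · exact h'
            rw [ihA k hkm', map_zero, map_zero]
        · intro h; exact absurd (Finset.mem_univ _) h
      constructor
      · intro j hj
        rw [hrel', map_sub, map_smul, ihA j (by omega), smul_zero, sub_zero]
        rw [hAsw j (by omega)]
        have hop := Φ.EAsE_zero j ⟨m, by omega⟩ (by simpa using hj)
        rw [← Module.End.mul_apply, ← Module.End.mul_apply, hop, LinearMap.zero_apply]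
      · have hmm : ((⟨m + 1, Nat.lt_succ_of_le hm⟩ : Fin (d+1)) : ℕ) = ((⟨m, by omega⟩ : Fin (d+1)) : ℕ) + 1 := rfl
        rw [hrel', map_sub, map_smul,
          ihA ⟨m + 1, Nat.lt_succ_of_le hm⟩ (by simp), smul_zero, sub_zero,
          hAsw ⟨m + 1, Nat.lt_succ_of_le hm⟩ (by simp)]
        exact hstep ⟨m, by omega⟩ ⟨m + 1, Nat.lt_succ_of_le hm⟩ hmm
          (Φ.E ⟨m, by omega⟩ w) (LinearMap.mem_range_self _ w) ihB
  -- triangularity restated for each i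
  have htop : ∀ i j : Fin (d+1), (d : ℕ) - (i : ℕ) < (j : ℕ) → Φ.E j (v i) = 0 := by
    intro i j hj
    have h := (key (d - (i : ℕ)) (Nat.sub_le d _)).1 j hj
    have hidx : (⟨d - (d - (i : ℕ)), Nat.lt_succ_of_le (Nat.sub_le d _)⟩ : Fin (d+1)) = i := by
      ext; show d - (d - (i : ℕ)) = (i : ℕ); omega
    rwa [hidx] at h
  have hdiag : ∀ i : Fin (d+1),
      Φ.E ⟨d - (i : ℕ), Nat.lt_succ_of_le (Nat.sub_le d _)⟩ (v i) ≠ 0 := by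
    intro i
    have h := (key (d - (i : ℕ)) (Nat.sub_le d _)).2
    have hidx : (⟨d - (d - (i : ℕ)), Nat.lt_succ_of_le (Nat.sub_le d _)⟩ : Fin (d+1)) = i := by
      ext; show d - (d - (i : ℕ)) = (i : ℕ); omega
    rwa [hidx] at h
  -- linear independence
  have hli : LinearIndependent K v := by
    rw [Fintype.linearIndependent_iff]
    intro g hg
    have H : ∀ n : ℕ, ∀ i : Fin (d+1), (i : ℕ) = n → g i = 0 := by
      intro n
      induction n using Nat.strong_induction_on with
      | _ n ihn =>
        intro i hi
        have happ := congrArg (Φ.E ⟨d - (i : ℕ), Nat.lt_succ_of_le (Nat.sub_le d _)⟩) hg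
        rw [map_sum, map_zero] at happ
        rw [Finset.sum_eq_single i] at happ
        · rw [map_smul] at happ
          rcases smul_eq_zero.mp happ with h | h
          · exact h
          · exact absurd h (hdiag i)
        · intro k _ hk
          rcases Nat.lt_or_ge (k : ℕ) (i : ℕ) with hlt | hge
          · rw [ihn (k : ℕ) (by omega) k rfl, zero_smul, map_zero]
          · have hgt : (i : ℕ) < (k : ℕ) := by
              rcases Nat.eq_or_lt_of_le hge with h' | h'
              · exact absurd (Fin.ext h'.symm) hk
              · exact h'
            have hk2 : (d : ℕ) - (k : ℕ) < (d : ℕ) - (i : ℕ) := by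
              have := k.is_lt; have := i.is_lt; omega
            rw [map_smul, htop k ⟨d - (i : ℕ), Nat.lt_succ_of_le (Nat.sub_le d _)⟩ hk2, smul_zero]
        · intro h; exact absurd (Finset.mem_univ _) h
    exact fun i => H (i : ℕ) i rfl
  refine ⟨hli, hli.span_eq_top_of_card_eq_finrank ?_⟩
  rw [Φ.finrank_eq, Fintype.card_fin]
end

section
/- Let Φ be a TH system on V with primitive idempotents E_0, E*_0 for the first eigenvalues. Then the map E*_0 V -> E_0 V, v ↦ E_0 v, and the map E_0 V -> E*_0 V, v ↦ E*_0 v, are both isomorphisms of one-dimensional K-vector spaces. Consequently there is a nonzero scalar ν ∈ K such that ν E_0 E*_0 E_0 = E_0 and ν E*_0 E_0 E*_0 = E*_0. -/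
section Aux

open Fin.NatCast

variable {K V : Type*} [Field K] [AddCommGroup V] [Module K V] {d : ℕ}

/-- In a submodule of rank ≤ 1, any element is a multiple of any nonzero element. -/
lemma THaux_span {p : Submodule K V} (hp : Module.finrank K p = 1)
    {w x : V} (hw : w ∈ p) (hw0 : w ≠ 0) (hx : x ∈ p) : ∃ c : K, x = c • w := by
  obtain ⟨v, -, hv⟩ := (finrank_eq_one_iff' (V := p)).mp hp
  obtain ⟨a, ha⟩ := hv ⟨w, hw⟩
  obtain ⟨b, hb⟩ := hv ⟨x, hx⟩
  have ha' : a • (v : V) = w := by simpa using congrArg Subtype.val ha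
  have hb' : b • (v : V) = x := by simpa using congrArg Subtype.val hb
  have ha0 : a ≠ 0 := by rintro rfl; simp at ha'; exact hw0 ha'.symm
  refine ⟨b * a⁻¹, ?_⟩
  rw [← ha', ← hb', smul_smul, mul_assoc, inv_mul_cancel₀ ha0, mul_one]

/-- Orthogonal idempotents summing to 1, compatible with a diagonalizable operator with
distinct eigenvalues on a `(d+1)`-dimensional space, have rank-one ranges. -/
lemma THaux_rank_one (A : Module.End K V) (G : Fin (d + 1) → Module.End K V)
    (θ : Fin (d + 1) → K) (hθ : Function.Injective θ)
    (hmul : ∀ i j, G i * G j = if i = j then G i else 0)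
    (hsum : ∑ i, G i = 1) (hne : ∀ i, G i ≠ 0)
    (hA : A = ∑ i, θ i • G i)
    (hdim : Module.finrank K V = d + 1) (i : Fin (d + 1)) :
    Module.finrank K (LinearMap.range (G i)) = 1 := by
  haveI : FiniteDimensional K V := .of_finrank_pos (by rw [hdim]; omega)
  have hle : ∀ j, LinearMap.range (G j) ≤ A.eigenspace (θ j) := by
    rintro j x ⟨y, rfl⟩
    rw [Module.End.mem_eigenspace_iff]
    have hop : A * G j = θ j • G j := by
      rw [hA, Finset.sum_mul]
      rw [Finset.sum_eq_single j]
      · rw [smul_mul_assoc, hmul, if_pos rfl]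
      · intro b _ hbj
        rw [smul_mul_assoc, hmul, if_neg hbj, smul_zero]
      · simp
    calc A (G j y) = (A * G j) y := rfl
      _ = θ j • G j y := by rw [hop]; rfl
  have hind : iSupIndep (fun j => LinearMap.range (G j)) :=
    ((A.eigenspaces_iSupIndep).comp hθ).mono hle
  have hsup : (⨆ j, LinearMap.range (G j)) = ⊤ := by
    rw [eq_top_iff]
    intro x _
    have hx : x = ∑ j, G j x := by
      have := congrArg (fun f : Module.End K V => f x) hsum
      simpa using this.symm
    rw [hx]
    exact Submodule.sum_mem _ fun j _ => Submodule.mem_iSup_of_mem j ⟨x, rfl⟩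
  have hint := DirectSum.isInternal_submodule_of_iSupIndep_of_iSup_eq_top hind hsup
  have heq : Module.finrank K V = ∑ j, Module.finrank K (LinearMap.range (G j)) := by
    rw [← Module.finrank_directSum]
    exact (LinearEquiv.ofBijective (DirectSum.coeLinearMap _) hint).symm.finrank_eq
  have hge : ∀ j, 1 ≤ Module.finrank K (LinearMap.range (G j)) := by
    intro j
    rw [Nat.one_le_iff_ne_zero]
    intro h0
    apply hne j
    obtain ⟨y, hy⟩ : ∃ y, G j y ≠ 0 := by
      by_contra hc
      push_neg at hc
      exact hne j (LinearMap.ext fun y => hc y)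
    have : (0 : ℕ) < Module.finrank K (LinearMap.range (G j)) :=
      Module.finrank_pos_iff_exists_ne_zero.mpr
        ⟨⟨G j y, LinearMap.mem_range_self _ y⟩, by simpa using hy⟩
    omega
  have hsum' : ∑ j : Fin (d + 1), Module.finrank K (LinearMap.range (G j))
      = ∑ _j : Fin (d + 1), 1 := by
    rw [← heq, hdim]; simp
  have := (Finset.sum_eq_sum_iff_of_le (fun j _ => hge j)).mp hsum'.symm
  exact (this i (Finset.mem_univ i)).symm

/-- Iterated application of `(B - θₖ)`. -/
def THaux_u (B : Module.End K V) (θ : Fin (d + 1) → K) (v : V) : ℕ → V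
  | 0 => v
  | k + 1 => B (THaux_u B θ v k) - θ ((k + 1 : ℕ) : Fin (d + 1)) • THaux_u B θ v k

/-- The key injectivity lemma: if `v` is a nonzero vector in `range (G 0)`, then `F 0 v ≠ 0`. -/
lemma THaux_key (B : Module.End K V) (F G : Fin (d + 1) → Module.End K V)
    (θ : Fin (d + 1) → K)
    (hFmul : ∀ i j, F i * F j = if i = j then F i else 0)
    (hFsum : ∑ i, F i = 1)
    (hGmul : ∀ i j, G i * G j = if i = j then G i else 0)
    (hGsum : ∑ i, G i = 1)
    (hB : B = ∑ i, θ i • F i)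
    (hz : ∀ i j : Fin (d + 1), (j : ℕ) + 1 < (i : ℕ) → G i * B * G j = 0)
    (hn : ∀ i j : Fin (d + 1), (i : ℕ) = (j : ℕ) + 1 → G i * B * G j ≠ 0)
    (hG1 : ∀ i, Module.finrank K (LinearMap.range (G i)) = 1)
    (v : V) (hv : G 0 v = v) (hv0 : v ≠ 0) : F 0 v ≠ 0 := by
  set u := THaux_u B θ v with hu
  -- expanding G j ∘ B through the resolution of identity
  have hGB : ∀ (j : Fin (d + 1)) (x : V), G j (B x) = ∑ i, (G j * B * G i) x := by
    intro j x
    have : G j * B = ∑ i, G j * B * G i := by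
      calc G j * B = G j * B * 1 := by rw [mul_one]
        _ = G j * B * (∑ i, G i) := by rw [hGsum]
        _ = ∑ i, G j * B * G i := by rw [Finset.mul_sum]
    calc G j (B x) = (G j * B) x := rfl
      _ = (∑ i, G j * B * G i) x := by rw [← this]
      _ = ∑ i, (G j * B * G i) x := by rw [LinearMap.sum_apply]
  have hFB : ∀ h : Fin (d + 1), F h * B = θ h • F h := by
    intro h
    rw [hB, Finset.mul_sum]
    rw [Finset.sum_eq_single h]
    · rw [mul_smul_comm, hFmul, if_pos rfl]
    · intro b _ hbh
      rw [mul_smul_comm, hFmul, if_neg (Ne.symm hbh), smul_zero]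
    · simp
  -- Claim 1
  have claim1 : ∀ k : ℕ, k ≤ d →
      (G ((k : ℕ) : Fin (d + 1)) (u k) ≠ 0 ∧ ∀ j : Fin (d + 1), k < (j : ℕ) → G j (u k) = 0) := by
    intro k
    induction k with
    | zero =>
      intro _
      have h00 : u 0 = v := rfl
      constructor
      · rw [h00, Nat.cast_zero, hv]
        exact hv0
      · intro j hj
        have hj0 : j ≠ 0 := by
          intro h; rw [h] at hj; simp at hj
        calc G j (u 0) = G j (G 0 v) := by rw [h00, hv]
          _ = (G j * G 0) v := rfl
          _ = 0 := by rw [hGmul, if_neg hj0]; rfl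
    | succ k ih =>
      intro hk1
      have hk : k ≤ d := by omega
      obtain ⟨ih1, ih2⟩ := ih hk
      have hkv : ((k : Fin (d + 1)) : ℕ) = k := by
        rw [Fin.val_natCast]; exact Nat.mod_eq_of_lt (by omega)
      have hk1v : (((k + 1 : ℕ) : Fin (d + 1)) : ℕ) = k + 1 := by
        rw [Fin.val_natCast]; exact Nat.mod_eq_of_lt (by omega)
      have hstep : ∀ j : Fin (d + 1), k + 1 ≤ (j : ℕ) →
          G j (u (k + 1)) = (G j * B * G ((k : ℕ) : Fin (d + 1))) (u k) := by
        intro j hj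
        have hju : G j (u k) = 0 := ih2 j (by omega)
        have : u (k + 1) = B (u k) - θ ((k + 1 : ℕ) : Fin (d + 1)) • u k := rfl
        rw [this, map_sub, map_smul, hju, smul_zero, sub_zero, hGB]
        rw [Finset.sum_eq_single ((k : ℕ) : Fin (d + 1))]
        · intro b _ hbk
          have hbv : (b : ℕ) ≠ k := by
            intro h
            apply hbk
            apply Fin.ext
            rw [hkv, h]
          rcases lt_or_gt_of_ne hbv with h | h
          · rw [Module.End.mul_apply, Module.End.mul_apply]
            have : G j * B * G b = 0 := hz j b (by omega)
            calc G j (B (G b (u k))) = (G j * B * G b) (u k) := rfl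
              _ = 0 := by rw [this]; rfl
          · have : G b (u k) = 0 := ih2 b (by omega)
            rw [Module.End.mul_apply, Module.End.mul_apply, this, map_zero, map_zero]
        · simp
      constructor
      · -- nonvanishing at k+1
        have hXne : G ((k + 1 : ℕ) : Fin (d + 1)) * B * G ((k : ℕ) : Fin (d + 1)) ≠ 0 :=
          hn _ _ (by rw [hkv, hk1v])
        obtain ⟨y, hy⟩ : ∃ y, (G ((k + 1 : ℕ) : Fin (d + 1)) * B * G ((k : ℕ) : Fin (d + 1))) y ≠ 0 := by
          by_contra hc
          push_neg at hc
          exact hXne (LinearMap.ext fun y => hc y)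
        obtain ⟨c, hc⟩ := THaux_span (hG1 ((k : ℕ) : Fin (d + 1)))
          (LinearMap.mem_range_self _ (u k)) ih1 (LinearMap.mem_range_self (G _) y)
        have hy' : (G ((k + 1 : ℕ) : Fin (d + 1)) * B * G ((k : ℕ) : Fin (d + 1))) y
            = c • (G ((k + 1 : ℕ) : Fin (d + 1)) * B * G ((k : ℕ) : Fin (d + 1))) (u k) := by
          rw [Module.End.mul_apply, Module.End.mul_apply, hc]
          rw [Module.End.mul_apply, Module.End.mul_apply]
          rw [map_smul, map_smul]
        rw [hstep _ (by omega)]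
        intro h0
        rw [h0, smul_zero] at hy'
        exact hy hy'
      · intro j hj
        rw [hstep j (by omega)]
        rcases lt_or_ge ((k : ℕ) + 1) (j : ℕ) with h | h
        · have : G j * B * G ((k : ℕ) : Fin (d + 1)) = 0 := hz j _ (by omega)
          rw [this]; rfl
        · omega
  -- Claim 2: if F 0 v = 0 then all F-components of u k with index ≤ k vanish
  intro hF0
  have claim2 : ∀ k : ℕ, k ≤ d → ∀ h : Fin (d + 1), (h : ℕ) ≤ k → F h (u k) = 0 := by
    intro k
    induction k with
    | zero =>
      intro _ h hh
      have : h = 0 := Fin.ext (by rw [Fin.val_zero]; omega)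
      rw [this]
      exact hF0
    | succ k ih =>
      intro hk1 h hh
      have hk : k ≤ d := by omega
      have hk1v : (((k + 1 : ℕ) : Fin (d + 1)) : ℕ) = k + 1 := by
        rw [Fin.val_natCast]; exact Nat.mod_eq_of_lt (by omega)
      have hexp : u (k + 1) = B (u k) - θ ((k + 1 : ℕ) : Fin (d + 1)) • u k := rfl
      have hFh : F h (B (u k)) = θ h • F h (u k) := by
        calc F h (B (u k)) = (F h * B) (u k) := rfl
          _ = θ h • F h (u k) := by rw [hFB]; rfl
      rw [hexp, map_sub, map_smul, hFh]
      rcases Nat.lt_or_ge (h : ℕ) (k + 1) with hlt | hge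
      · rw [ih hk h (by omega), smul_zero, smul_zero, sub_zero]
      · have : h = ((k + 1 : ℕ) : Fin (d + 1)) := Fin.ext (by omega)
        rw [this, sub_self]
  -- conclude
  have hud : u d = 0 := by
    have hall : ∀ h : Fin (d + 1), F h (u d) = 0 := fun h =>
      claim2 d le_rfl h (by omega)
    have : u d = (∑ h, F h) (u d) := by rw [hFsum]; rfl
    rw [this, LinearMap.sum_apply]
    exact Finset.sum_eq_zero fun h _ => hall h
  have := (claim1 d le_rfl).1
  rw [hud, map_zero] at this
  exact this rfl

end Aux


/-- The maps `E*_0 V → E_0 V, v ↦ E_0 v` and `E_0 V → E*_0 V, v ↦ E*_0 v` are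
isomorphisms, and there is a nonzero scalar `ν` with `ν E_0 E*_0 E_0 = E_0` and
`ν E*_0 E_0 E*_0 = E*_0`. -/
theorem E0_Estar0_maps_bijective {K V : Type*} [Field K] [AddCommGroup V] [Module K V]
    {d : ℕ} (Φ : THSystem K V d) :
    Function.Bijective
      ((Φ.E 0).restrict (p := LinearMap.range (Φ.Estar 0)) (q := LinearMap.range (Φ.E 0))
        (fun x _ => LinearMap.mem_range_self _ x)) ∧
    Function.Bijective
      ((Φ.Estar 0).restrict (p := LinearMap.range (Φ.E 0)) (q := LinearMap.range (Φ.Estar 0))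
        (fun x _ => LinearMap.mem_range_self _ x)) ∧
    ∃ ν : K, ν ≠ 0 ∧
      ν • (Φ.E 0 * Φ.Estar 0 * Φ.E 0) = Φ.E 0 ∧
      ν • (Φ.Estar 0 * Φ.E 0 * Φ.Estar 0) = Φ.Estar 0 := by

  have hE1 := THaux_rank_one Φ.A Φ.E Φ.θ Φ.θ_inj Φ.E_mul Φ.sum_E Φ.E_ne Φ.A_eq Φ.finrank_eq
  have hEs1 := THaux_rank_one Φ.Astar Φ.Estar Φ.θs Φ.θs_inj Φ.Es_mul Φ.sum_Es Φ.Es_ne Φ.As_eq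
    Φ.finrank_eq
  have inj1 : ∀ v, Φ.Estar 0 v = v → v ≠ 0 → Φ.E 0 v ≠ 0 := fun v hv hv0 =>
    THaux_key Φ.A Φ.E Φ.Estar Φ.θ Φ.E_mul Φ.sum_E Φ.Es_mul Φ.sum_Es Φ.A_eq Φ.EsAEs_zero
      Φ.EsAEs_ne hEs1 v hv hv0
  have inj2 : ∀ v, Φ.E 0 v = v → v ≠ 0 → Φ.Estar 0 v ≠ 0 := fun v hv hv0 =>
    THaux_key Φ.Astar Φ.Estar Φ.E Φ.θs Φ.Es_mul Φ.sum_Es Φ.E_mul Φ.sum_E Φ.As_eq Φ.EAsE_zero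
      Φ.EAsE_ne hE1 v hv hv0
  have idem : ∀ P : Module.End K V, P * P = P → ∀ x, P (P x) = P x := by
    intro P h x
    calc P (P x) = (P * P) x := rfl
      _ = P x := by rw [h]
  have hEidem : Φ.E 0 * Φ.E 0 = Φ.E 0 := by simpa using Φ.E_mul 0 0
  have hEsidem : Φ.Estar 0 * Φ.Estar 0 = Φ.Estar 0 := by simpa using Φ.Es_mul 0 0
  have fixE : ∀ z ∈ LinearMap.range (Φ.E 0), Φ.E 0 z = z := by
    rintro z ⟨y, rfl⟩; exact idem _ hEidem y
  have fixEs : ∀ z ∈ LinearMap.range (Φ.Estar 0), Φ.Estar 0 z = z := by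
    rintro z ⟨y, rfl⟩; exact idem _ hEsidem y
  obtain ⟨x, hx⟩ : ∃ x, Φ.E 0 x ≠ 0 := by
    by_contra hc
    push_neg at hc
    exact Φ.E_ne 0 (LinearMap.ext fun y => hc y)
  set u : V := Φ.E 0 x with hudef
  have humem : u ∈ LinearMap.range (Φ.E 0) := LinearMap.mem_range_self _ x
  have hu : Φ.E 0 u = u := fixE u humem
  have hu0 : u ≠ 0 := hx
  set w : V := Φ.Estar 0 u with hwdef
  have hwmem : w ∈ LinearMap.range (Φ.Estar 0) := LinearMap.mem_range_self _ u
  have hw : Φ.Estar 0 w = w := fixEs w hwmem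
  have hw0 : w ≠ 0 := inj2 u hu hu0
  have hEw : Φ.E 0 w ≠ 0 := inj1 w hw hw0
  obtain ⟨c, hc⟩ := THaux_span (hE1 0) humem hu0 (LinearMap.mem_range_self (Φ.E 0) w)
  -- hc : Φ.E 0 w = c • u
  have hc0 : c ≠ 0 := by
    rintro rfl
    rw [zero_smul] at hc
    exact hEw hc
  have op1 : Φ.E 0 * Φ.Estar 0 * Φ.E 0 = c • Φ.E 0 := by
    apply LinearMap.ext
    intro y
    obtain ⟨a, ha⟩ := THaux_span (hE1 0) humem hu0 (LinearMap.mem_range_self (Φ.E 0) y)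
    calc (Φ.E 0 * Φ.Estar 0 * Φ.E 0) y = Φ.E 0 (Φ.Estar 0 (Φ.E 0 y)) := rfl
      _ = Φ.E 0 (Φ.Estar 0 (a • u)) := by rw [ha]
      _ = a • Φ.E 0 (Φ.Estar 0 u) := by rw [map_smul, map_smul]
      _ = a • (c • u) := by rw [← hwdef, hc]
      _ = c • (a • u) := smul_comm a c u
      _ = c • Φ.E 0 y := by rw [ha]
      _ = (c • Φ.E 0) y := rfl
  have hEw' : Φ.E 0 (Φ.E 0 w) = Φ.E 0 w := idem _ hEidem w
  have hEsEw : Φ.Estar 0 (Φ.E 0 w) ≠ 0 := inj2 (Φ.E 0 w) hEw' hEw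
  obtain ⟨c2, hc2⟩ := THaux_span (hEs1 0) hwmem hw0
    (LinearMap.mem_range_self (Φ.Estar 0) (Φ.E 0 w))
  -- hc2 : Φ.Estar 0 (Φ.E 0 w) = c2 • w
  have op2 : Φ.Estar 0 * Φ.E 0 * Φ.Estar 0 = c2 • Φ.Estar 0 := by
    apply LinearMap.ext
    intro y
    obtain ⟨a, ha⟩ := THaux_span (hEs1 0) hwmem hw0 (LinearMap.mem_range_self (Φ.Estar 0) y)
    calc (Φ.Estar 0 * Φ.E 0 * Φ.Estar 0) y = Φ.Estar 0 (Φ.E 0 (Φ.Estar 0 y)) := rfl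
      _ = Φ.Estar 0 (Φ.E 0 (a • w)) := by rw [ha]
      _ = a • Φ.Estar 0 (Φ.E 0 w) := by rw [map_smul, map_smul]
      _ = a • (c2 • w) := by rw [hc2]
      _ = c2 • (a • w) := smul_comm a c2 w
      _ = c2 • Φ.Estar 0 y := by rw [ha]
      _ = (c2 • Φ.Estar 0) y := rfl
  have hX : Φ.Estar 0 * Φ.E 0 ≠ 0 := by
    intro h0
    apply hw0
    have : (Φ.Estar 0 * Φ.E 0) u = 0 := by rw [h0]; rfl
    calc w = Φ.Estar 0 (Φ.E 0 u) := by rw [hu]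
      _ = (Φ.Estar 0 * Φ.E 0) u := rfl
      _ = 0 := this
  have hc2c : c2 = c := by
    have h1 : Φ.Estar 0 * Φ.E 0 * Φ.Estar 0 * Φ.E 0 = c2 • (Φ.Estar 0 * Φ.E 0) := by
      rw [op2, smul_mul_assoc]
    have h2 : Φ.Estar 0 * Φ.E 0 * Φ.Estar 0 * Φ.E 0 = c • (Φ.Estar 0 * Φ.E 0) := by
      calc Φ.Estar 0 * Φ.E 0 * Φ.Estar 0 * Φ.E 0
          = Φ.Estar 0 * (Φ.E 0 * Φ.Estar 0 * Φ.E 0) := by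
            rw [mul_assoc, mul_assoc, mul_assoc]
        _ = Φ.Estar 0 * (c • Φ.E 0) := by rw [op1]
        _ = c • (Φ.Estar 0 * Φ.E 0) := by rw [mul_smul_comm]
    have h3 : (c2 - c) • (Φ.Estar 0 * Φ.E 0) = 0 := by
      rw [sub_smul, ← h1, ← h2, sub_self]
    rcases smul_eq_zero.mp h3 with h | h
    · exact sub_eq_zero.mp h
    · exact absurd h hX
  refine ⟨⟨?_, ?_⟩, ⟨?_, ?_⟩, c⁻¹, inv_ne_zero hc0, ?_, ?_⟩
  · -- injectivity of E 0 restricted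
    intro a b hab
    have hab' : Φ.E 0 (a : V) = Φ.E 0 (b : V) := by
      have := congrArg Subtype.val hab
      simpa [LinearMap.restrict_apply] using this
    have hmemab : ((a : V) - (b : V)) ∈ LinearMap.range (Φ.Estar 0) :=
      Submodule.sub_mem _ a.2 b.2
    have : (a : V) - (b : V) = 0 := by
      by_contra hne
      exact inj1 _ (fixEs _ hmemab) hne (by rw [map_sub, hab', sub_self])
    exact Subtype.ext (sub_eq_zero.mp this)
  · -- surjectivity of E 0 restricted
    rintro ⟨y, z, rfl⟩
    refine ⟨⟨c⁻¹ • Φ.Estar 0 (Φ.E 0 z),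
      Submodule.smul_mem _ _ (LinearMap.mem_range_self _ _)⟩, ?_⟩
    apply Subtype.ext
    show Φ.E 0 (c⁻¹ • Φ.Estar 0 (Φ.E 0 z)) = Φ.E 0 z
    have : Φ.E 0 (Φ.Estar 0 (Φ.E 0 z)) = c • Φ.E 0 z := by
      calc Φ.E 0 (Φ.Estar 0 (Φ.E 0 z)) = (Φ.E 0 * Φ.Estar 0 * Φ.E 0) z := rfl
        _ = (c • Φ.E 0) z := by rw [op1]
        _ = c • Φ.E 0 z := rfl
    rw [map_smul, this, smul_smul, inv_mul_cancel₀ hc0, one_smul]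
  · -- injectivity of Estar 0 restricted
    intro a b hab
    have hab' : Φ.Estar 0 (a : V) = Φ.Estar 0 (b : V) := by
      have := congrArg Subtype.val hab
      simpa [LinearMap.restrict_apply] using this
    have hmemab : ((a : V) - (b : V)) ∈ LinearMap.range (Φ.E 0) :=
      Submodule.sub_mem _ a.2 b.2
    have : (a : V) - (b : V) = 0 := by
      by_contra hne
      exact inj2 _ (fixE _ hmemab) hne (by rw [map_sub, hab', sub_self])
    exact Subtype.ext (sub_eq_zero.mp this)
  · -- surjectivity of Estar 0 restricted
    rintro ⟨y, z, rfl⟩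
    refine ⟨⟨c⁻¹ • Φ.E 0 (Φ.Estar 0 z),
      Submodule.smul_mem _ _ (LinearMap.mem_range_self _ _)⟩, ?_⟩
    apply Subtype.ext
    show Φ.Estar 0 (c⁻¹ • Φ.E 0 (Φ.Estar 0 z)) = Φ.Estar 0 z
    have : Φ.Estar 0 (Φ.E 0 (Φ.Estar 0 z)) = c • Φ.Estar 0 z := by
      calc Φ.Estar 0 (Φ.E 0 (Φ.Estar 0 z)) = (Φ.Estar 0 * Φ.E 0 * Φ.Estar 0) z := rfl
        _ = (c2 • Φ.Estar 0) z := by rw [op2]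
        _ = c • Φ.Estar 0 z := by rw [hc2c]; rfl
    rw [map_smul, this, smul_smul, inv_mul_cancel₀ hc0, one_smul]
  · rw [op1, smul_smul, inv_mul_cancel₀ hc0, one_smul]
  · rw [op2, hc2c, smul_smul, inv_mul_cancel₀ hc0, one_smul]
end

section
/- Let Φ be a TH system on V and let 0 ≠ η_0 ∈ E_0 V. A sequence of vectors {v_i}_{i=0}^d in V, not all zero, equals a Φ-standard basis (i.e., v_i = E*_i η_0 for some nonzero η_0 ∈ E_0 V) if and only if (i) v_i ∈ E*_i V for 0 ≤ i ≤ d and (ii) Σ_{i=0}^d v_i ∈ E_0 V. -/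
/-- Characterization of `Φ`-standard bases: `v`, not all zero, has the form
`v_i = E*_i η₀` for some nonzero `η₀ ∈ E_0 V` iff `v_i ∈ E*_i V` for all `i`
and `Σ_i v_i ∈ E_0 V`. -/
theorem standardBasis_characterization {K V : Type*} [Field K] [AddCommGroup V]
    [Module K V] {d : ℕ} (Φ : THSystem K V d)
    (v : Fin (d + 1) → V) (hv : ∃ i, v i ≠ 0) :
    (∃ η₀ : V, η₀ ≠ 0 ∧ η₀ ∈ LinearMap.range (Φ.E 0) ∧ ∀ i, v i = Φ.Estar i η₀) ↔
      ((∀ i, v i ∈ LinearMap.range (Φ.Estar i)) ∧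
        (∑ i, v i) ∈ LinearMap.range (Φ.E 0)) := by

  constructor
  · rintro ⟨η₀, hne, hmem, hveq⟩
    have hsum : ∑ i, v i = η₀ := by
      calc ∑ i, v i = ∑ i, Φ.Estar i η₀ := by simp [hveq]
        _ = (∑ i, Φ.Estar i) η₀ := by
            simp [LinearMap.sum_apply]
        _ = η₀ := by rw [Φ.sum_Es]; rfl
    exact ⟨fun i => hveq i ▸ ⟨η₀, rfl⟩, hsum ▸ hmem⟩
  · rintro ⟨hmem, hsum⟩
    refine ⟨∑ i, v i, ?_, hsum, fun i => ?_⟩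
    · intro h0
      have key : ∀ i j, Φ.Estar i (v j) = if i = j then v j else 0 := by
        intro i j
        obtain ⟨u, hu⟩ := hmem j
        have := congrArg (fun f : Module.End K V => f u) (Φ.Es_mul i j)
        simp only [Module.End.mul_apply, hu] at this ⊢
        split_ifs with h <;> simp_all
      obtain ⟨i, hi⟩ := hv
      apply hi
      have : Φ.Estar i (∑ j, v j) = v i := by
        rw [map_sum]
        rw [Finset.sum_eq_single i]
        · simp [key]
        · intro j _ hj; simp [key, hj.symm]
        · simp
      rw [h0, map_zero] at this
      exact this.symm
    · obtain ⟨u, hu⟩ := hmem i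
      have key : ∀ j, Φ.Estar i (v j) = if i = j then v j else 0 := by
        intro j
        obtain ⟨w, hw⟩ := hmem j
        have := congrArg (fun f : Module.End K V => f w) (Φ.Es_mul i j)
        simp only [Module.End.mul_apply, hw] at this ⊢
        split_ifs with h <;> simp_all
      rw [map_sum, Finset.sum_eq_single i]
      · simp [key]
      · intro j _ hj; simp [key, hj.symm]
      · simp
end

section
/- Let {θ*_i}_{i=0}^d be mutually distinct elements of a field K. Let T be the upper triangular (d+1)x(d+1) matrix with entries T_{ij} = (θ*_i - θ*_{j+1})(θ*_i - θ*_{j+2})···(θ*_i - θ*_d) for 0 ≤ i ≤ j ≤ d and T_{ij} = 0 for i > j. Then T is invertible and T^{-1} is upper triangular with entries T^{-1}_{ij} = 1 / [ (θ*_j - θ*_i)(θ*_j - θ*_{i+1})···(θ*_j - θ*_{j-1}) · (θ*_j - θ*_{j+1})···(θ*_j - θ*_d) ] for 0 ≤ i ≤ j ≤ d. -/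
open Finset

namespace TransitionMatrixInverseAux

variable {K : Type*} [Field K] {d : ℕ}

lemma filt_Ici (k : Fin (d + 1)) :
    (univ.filter (fun l : Fin (d + 1) => (k : ℕ) ≤ (l : ℕ))) = Ici k := by
  ext l; simp only [mem_filter, mem_univ, true_and, mem_Ici, Fin.le_def]

lemma filt_Ioi (k : Fin (d + 1)) :
    (univ.filter (fun l : Fin (d + 1) => (k : ℕ) + 1 ≤ (l : ℕ))) = Ioi k := by
  ext l; simp only [mem_filter, mem_univ, true_and, mem_Ioi, Fin.lt_def, Nat.succ_le_iff]

lemma filt_erase (n : ℕ) (j : Fin (d + 1)) :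
    (univ.filter (fun l : Fin (d + 1) => n ≤ (l : ℕ) ∧ l ≠ j)) =
      (univ.filter (fun l : Fin (d + 1) => n ≤ (l : ℕ))).erase j := by
  ext l
  simp only [mem_filter, mem_univ, true_and, mem_erase]
  tauto

/-- The telescoping auxiliary quantity. -/
noncomputable def A (θs : Fin (d + 1) → K) (i j : Fin (d + 1)) (n : ℕ) : K :=
  (∏ l ∈ univ.filter (fun l : Fin (d + 1) => n ≤ (l : ℕ)), (θs i - θs l)) *
    (∏ l ∈ univ.filter (fun l : Fin (d + 1) => n ≤ (l : ℕ) ∧ l ≠ j), (θs j - θs l))⁻¹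

lemma sub_ne {θs : Fin (d + 1) → K} (hinj : Function.Injective θs)
    (a b : Fin (d + 1)) (hab : a ≠ b) : θs a - θs b ≠ 0 :=
  sub_ne_zero.mpr (fun e => hab (hinj e))

lemma prod_erase_ne_zero {θs : Fin (d + 1) → K} (hinj : Function.Injective θs)
    (j : Fin (d + 1)) (s : Finset (Fin (d + 1))) :
    (∏ l ∈ s.erase j, (θs j - θs l)) ≠ 0 := by
  rw [Finset.prod_ne_zero_iff]
  intro l hl
  exact sub_ne hinj j l (Ne.symm (mem_erase.mp hl).1)

lemma A_zero (θs : Fin (d + 1) → K) (i j : Fin (d + 1)) : A θs i j ↑i = 0 := by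
  unfold A
  rw [Finset.prod_eq_zero (i := i) (by simp) (by simp), zero_mul]

lemma A_j_succ (θs : Fin (d + 1) → K) (i j : Fin (d + 1)) :
    A θs i j (↑j + 1) =
      (∏ l ∈ Ioi j, (θs i - θs l)) * (∏ l ∈ Ioi j, (θs j - θs l))⁻¹ := by
  unfold A
  rw [filt_erase, filt_Ioi, Finset.erase_eq_of_notMem notMem_Ioi_self]

lemma A_j (θs : Fin (d + 1) → K) (i j : Fin (d + 1)) :
    A θs i j ↑j = (θs i - θs j) * A θs i j (↑j + 1) := by
  rw [A_j_succ]
  unfold A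
  rw [filt_erase, filt_Ici, Finset.Ici_erase, Ici_eq_cons_Ioi, prod_cons]
  ring

/-- The telescoping step identity. -/
lemma step {θs : Fin (d + 1) → K} (hinj : Function.Injective θs)
    (i j k : Fin (d + 1)) (hij : i < j) (hkj : k < j) :
    (∏ l ∈ Ioi k, (θs i - θs l)) * (∏ l ∈ (Ici k).erase j, (θs j - θs l))⁻¹ =
      (θs i - θs j)⁻¹ * (A θs i j ↑k - A θs i j (↑k + 1)) := by
  have hjk : j ≠ k := (ne_of_gt hkj)
  have hIci : Ici k = insert k (Ioi k) := by
    rw [Ici_eq_cons_Ioi, Finset.cons_eq_insert]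
  have he : (Ici k).erase j = insert k ((Ioi k).erase j) := by
    rw [hIci, Finset.erase_insert_of_ne (Ne.symm hjk)]
  have hknotmem : k ∉ (Ioi k).erase j := fun hmem =>
    notMem_Ioi_self (Finset.mem_of_mem_erase hmem)
  have hknotmem' : k ∉ Ioi k := notMem_Ioi_self
  unfold A
  rw [filt_erase, filt_erase, filt_Ici, filt_Ioi, he, hIci,
    Finset.prod_insert hknotmem, Finset.prod_insert hknotmem']
  set P := ∏ l ∈ Ioi k, (θs i - θs l) with hP
  set Q := ∏ l ∈ (Ioi k).erase j, (θs j - θs l) with hQ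
  have hQ0 : Q ≠ 0 := prod_erase_ne_zero hinj j _
  have ha : θs j - θs k ≠ 0 := sub_ne hinj j k hjk
  have hb : θs i - θs j ≠ 0 := sub_ne hinj i j (ne_of_lt hij)
  field_simp
  ring

end TransitionMatrixInverseAux

section main
variable {K : Type*} [Field K] {d : ℕ}

lemma telescope (f : ℕ → K) (a b : ℕ) (hab : a ≤ b) :
    ∑ n ∈ Ico a b, (f n - f (n + 1)) = f a - f b := by
  rw [Finset.sum_Ico_eq_sum_range]
  simpa [Nat.add_sub_cancel' hab, ← add_assoc] using Finset.sum_range_sub' (fun m => f (a + m)) (b - a)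

lemma main_sum {θs : Fin (d + 1) → K} (hinj : Function.Injective θs) (i j : Fin (d + 1)) :
    ∑ k : Fin (d + 1),
      (if i ≤ k then ∏ l ∈ Ioi k, (θs i - θs l) else 0) *
      (if k ≤ j then (∏ l ∈ (Ici k).erase j, (θs j - θs l))⁻¹ else 0) =
      if i = j then 1 else 0 := by
  rcases lt_trichotomy i j with hij | rfl | hij
  · rw [if_neg (ne_of_lt hij)]
    have hsub : ∑ k : Fin (d + 1),
        (if i ≤ k then ∏ l ∈ Ioi k, (θs i - θs l) else 0) *
        (if k ≤ j then (∏ l ∈ (Ici k).erase j, (θs j - θs l))⁻¹ else 0) =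
        ∑ k ∈ Icc i j,
        (if i ≤ k then ∏ l ∈ Ioi k, (θs i - θs l) else 0) *
        (if k ≤ j then (∏ l ∈ (Ici k).erase j, (θs j - θs l))⁻¹ else 0) := by
      refine (Finset.sum_subset (subset_univ _) ?_).symm
      intro k _ hk
      rw [mem_Icc] at hk
      push_neg at hk
      by_cases hik : i ≤ k
      · rw [if_neg (fun hkj => absurd (hk hik) (not_lt_of_ge hkj)), mul_zero]
      · rw [if_neg hik, zero_mul]
    rw [hsub, Icc_eq_cons_Ico (le_of_lt hij), sum_cons,
      if_pos (le_of_lt hij), if_pos (le_refl j)]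
    have hdiag : (∏ l ∈ Ioi j, (θs i - θs l)) *
        (∏ l ∈ (Ici j).erase j, (θs j - θs l))⁻¹ = TransitionMatrixInverseAux.A θs i j (↑j + 1) := by
      rw [Finset.Ici_erase, TransitionMatrixInverseAux.A_j_succ]
    have hstep : ∑ k ∈ Ico i j,
        (if i ≤ k then ∏ l ∈ Ioi k, (θs i - θs l) else 0) *
        (if k ≤ j then (∏ l ∈ (Ici k).erase j, (θs j - θs l))⁻¹ else 0) =
        ∑ k ∈ Ico i j, (θs i - θs j)⁻¹ *
          (TransitionMatrixInverseAux.A θs i j ↑k - TransitionMatrixInverseAux.A θs i j (↑k + 1)) := by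
      refine Finset.sum_congr rfl ?_
      intro k hk
      rw [mem_Ico] at hk
      rw [if_pos hk.1, if_pos (le_of_lt hk.2)]
      exact TransitionMatrixInverseAux.step hinj i j k hij hk.2
    rw [hdiag, hstep, ← Finset.mul_sum]
    have hnat : ∑ k ∈ Ico i j,
        (TransitionMatrixInverseAux.A θs i j ↑k - TransitionMatrixInverseAux.A θs i j (↑k + 1)) =
        ∑ n ∈ Ico (↑i : ℕ) ↑j,
        (TransitionMatrixInverseAux.A θs i j n - TransitionMatrixInverseAux.A θs i j (n + 1)) := by
      rw [← Fin.map_valEmbedding_Ico, sum_map]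
      rfl
    rw [hnat, telescope _ _ _ (le_of_lt (Fin.lt_def.mp hij)),
      TransitionMatrixInverseAux.A_zero, TransitionMatrixInverseAux.A_j]
    have hb : θs i - θs j ≠ 0 := TransitionMatrixInverseAux.sub_ne hinj i j (ne_of_lt hij)
    field_simp
    ring
  · rw [if_pos rfl]
    rw [Finset.sum_eq_single_of_mem i (mem_univ i)]
    · rw [if_pos (le_refl i), if_pos (le_refl i), Finset.Ici_erase,
        mul_inv_cancel₀]
      have hne := TransitionMatrixInverseAux.prod_erase_ne_zero hinj i (Ici i)
      rwa [Finset.Ici_erase] at hne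
    · intro k _ hki
      by_cases hik : i ≤ k
      · rw [if_neg (fun hkj => hki (le_antisymm hkj hik)), mul_zero]
      · rw [if_neg hik, zero_mul]
  · rw [if_neg (ne_of_gt hij)]
    refine Finset.sum_eq_zero ?_
    intro k _
    by_cases hik : i ≤ k
    · rw [if_neg (fun hkj => absurd (lt_of_lt_of_le hij hik) (not_lt_of_ge hkj)), mul_zero]
    · rw [if_neg hik, zero_mul]

end main

/-- For mutually distinct scalars `θ*_0, …, θ*_d`, the upper triangular matrix
`T` with `T_{ij} = (θ*_i - θ*_{j+1})⋯(θ*_i - θ*_d)` for `i ≤ j` is invertible,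
with inverse the upper triangular matrix `S` whose `(i,j)` entry for `i ≤ j` is
the reciprocal of `∏_{i ≤ k ≤ d, k ≠ j} (θ*_j - θ*_k)`. -/
theorem transition_matrix_inverse {K : Type*} [Field K] {d : ℕ}
    (θs : Fin (d + 1) → K) (h : Function.Injective θs)
    (T S : Matrix (Fin (d + 1)) (Fin (d + 1)) K)
    (hT : ∀ i j : Fin (d + 1), T i j =
      if i ≤ j then ∏ k ∈ Finset.Ioi j, (θs i - θs k) else 0)
    (hS : ∀ i j : Fin (d + 1), S i j =
      if i ≤ j then (∏ k ∈ (Finset.Ici i).erase j, (θs j - θs k))⁻¹ else 0) :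
    T * S = 1 ∧ S * T = 1 := by
  have hTS : T * S = 1 := by
    ext i j
    rw [Matrix.mul_apply, Matrix.one_apply]
    simp_rw [hT, hS]
    exact main_sum h i j
  exact ⟨hTS, mul_eq_one_comm.mp hTS⟩
end
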